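/- Let (N,v) be a convex integer coalitional game with SV_i(N,v) ∈ [0,1) for every i ∈ N, and let π be a linear order on N such that SV values are nonincreasing along π. Let C be the set of vectors in {0,1}^N that belong to the core of (N,v), and suppose x* ∈ C is lexicographically maximal in C with respect to π (i.e., there is no y ∈ C such that at the first position of π where x* and y differ, y has value 1 and x* has value 0). Then for every real p ≥ 1 and every y ∈ C it holds that (Σ_{i∈N} |SV_i(N,v) − x*_i|^p)^{1/p} ≤ (Σ_{i∈N} |SV_i(N,v) − y_i|^p)^{1/p}. -/
import Mathlib


open Finset

/-- A game is convex if marginal contributions increase with coalition size. -/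
def IsConvex {α : Type*} [DecidableEq α] (v : Finset α → ℝ) : Prop :=
  ∀ (i : α) (S T : Finset α), S ⊆ T → i ∉ T →
    v (insert i S) - v S ≤ v (insert i T) - v T

/-- An integer game: every coalition value is an integer. -/
def IsIntegerGame {α : Type*} (v : Finset α → ℝ) : Prop :=
  ∀ S : Finset α, ∃ z : ℤ, v S = (z : ℝ)

/-- A size-bounded game: `v S < |S|` for every nonempty coalition. -/
def IsSizeBounded {α : Type*} (v : Finset α → ℝ) : Prop :=
  ∀ S : Finset α, S.Nonempty → v S < (S.card : ℝ)

/-- A payoff vector belongs to the core. -/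
def InCore {α : Type*} [Fintype α] [DecidableEq α] (v : Finset α → ℝ) (x : α → ℝ) : Prop :=
  (∑ i, x i) = v Finset.univ ∧ ∀ S : Finset α, v S ≤ ∑ i ∈ S, x i

/-- The set of players preceding `i` in the ordering `σ`. -/
def preSet {α : Type*} [Fintype α] [DecidableEq α]
    (σ : α ≃ Fin (Fintype.card α)) (i : α) : Finset α :=
  Finset.univ.filter (fun j => σ j < σ i)

/-- The Shapley value of player `i`: average marginal contribution over all orderings. -/
noncomputable def SV {α : Type*} [Fintype α] [DecidableEq α]
    (v : Finset α → ℝ) (i : α) : ℝ :=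
  (∑ σ : α ≃ Fin (Fintype.card α), (v (insert i (preSet σ i)) - v (preSet σ i))) /
    (Nat.factorial (Fintype.card α) : ℝ)

/-- The Harsanyi dividend of a coalition. -/
noncomputable def dividend {α : Type*} [DecidableEq α] (v : Finset α → ℝ) (S : Finset α) : ℝ :=
  ∑ T ∈ S.powerset, (-1 : ℝ) ^ (S.card - T.card) * v T

/-- A positive game: all Harsanyi dividends are nonnegative. -/
def IsPositive {α : Type*} [DecidableEq α] (v : Finset α → ℝ) : Prop :=
  ∀ S : Finset α, 0 ≤ dividend v S

/-- The `c`-reduced game on player set `N \ {i}`. -/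
noncomputable def reducedGame {α : Type*} [Fintype α] [DecidableEq α]
    (v : Finset α → ℝ) (i : α) (c : ℝ) : Finset {j : α // j ≠ i} → ℝ :=
  fun S =>
    if S = Finset.univ then v Finset.univ - c
    else if S = ∅ then 0
    else max (v (insert i (S.image Subtype.val)) - c) (v (S.image Subtype.val))

lemma aux_step {α : Type*} [DecidableEq α] (v : Finset α → ℝ) (hconv : IsConvex v) :
    ∀ (D S T : Finset α), S ⊆ T → Disjoint D T →
      v (S ∪ D) - v S ≤ v (T ∪ D) - v T := by
  intro D
  induction D using Finset.induction_on with
  | empty => intro S T _ _; simp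
  | @insert a D ha ih =>
      intro S T hST hDT
      have haT : a ∉ T := by
        have := Finset.disjoint_left.mp hDT (Finset.mem_insert_self a D); exact this
      have hDT' : Disjoint D T := Finset.disjoint_insert_left.mp hDT |>.2
      have haD : a ∉ D := ha
      have h1 : S ∪ insert a D = insert a (S ∪ D) := by
        ext x; simp [Finset.mem_insert, Finset.mem_union]
      have h2 : T ∪ insert a D = insert a (T ∪ D) := by
        ext x; simp [Finset.mem_insert, Finset.mem_union]
      have hc := hconv a (S ∪ D) (T ∪ D) (Finset.union_subset_union hST le_rfl)
        (by simp [Finset.mem_union, haT, haD])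
      have hi := ih S T hST hDT'
      rw [h1, h2]; linarith

lemma supermod {α : Type*} [DecidableEq α] (v : Finset α → ℝ) (hconv : IsConvex v)
    (S T : Finset α) : v S + v T ≤ v (S ∪ T) + v (S ∩ T) := by
  have h := aux_step v hconv (S \ T) (S ∩ T) T Finset.inter_subset_right Finset.sdiff_disjoint
  have e1 : S ∩ T ∪ S \ T = S := by rw [Finset.union_comm]; exact Finset.sdiff_union_inter S T
  have e2 : T ∪ S \ T = S ∪ T := by
    rw [Finset.union_sdiff_self_eq_union, Finset.union_comm]
  rw [e1, e2] at h; linarith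

lemma coexchange {α : Type*} [Fintype α] [DecidableEq α] (v : Finset α → ℝ)
    (hv0 : v ∅ = 0) (hconv : IsConvex v) (hint : IsIntegerGame v)
    (x y : α → ℝ) (hx01 : ∀ k, x k = 0 ∨ x k = 1) (hy01 : ∀ k, y k = 0 ∨ y k = 1)
    (hx : InCore v x) (hy : InCore v y) (i : α) (hxi : x i = 0) (hyi : y i = 1) :
    ∃ j : α, j ≠ i ∧ x j = 1 ∧ y j = 0 ∧
      InCore v (fun k => if k = i then 1 else if k = j then 0 else x k) := by
  classical
  -- tight sets avoiding i
  set P : Finset α → Prop := fun S => i ∉ S ∧ (∑ k ∈ S, x k) = v S with hP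
  have hPbot : P ⊥ := by
    constructor
    · simp
    · simp [hv0]
  have hPsup : ∀ S, P S → ∀ T, P T → P (S ⊔ T) := by
    intro S hS T hT
    constructor
    · simp only [Finset.sup_eq_union, Finset.mem_union]; tauto
    · have h1 := supermod v hconv S T
      have h2 : (∑ k ∈ S ∪ T, x k) + (∑ k ∈ S ∩ T, x k) = (∑ k ∈ S, x k) + (∑ k ∈ T, x k) :=
        Finset.sum_union_inter
      have h3 := hx.2 (S ∪ T)
      have h4 := hx.2 (S ∩ T)
      have := hS.2; have := hT.2
      simp only [Finset.sup_eq_union]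
      linarith
  set F : Finset (Finset α) := Finset.univ.filter (fun S => i ∉ S ∧ (∑ k ∈ S, x k) = v S)
    with hF
  set U : Finset α := F.sup id with hU
  have hPU : P U := Finset.sup_induction hPbot hPsup (fun S hS => by
    simp only [hF, Finset.mem_filter] at hS; exact hS.2)
  have hsubU : ∀ S : Finset α, i ∉ S → (∑ k ∈ S, x k) = v S → S ⊆ U := by
    intro S h1 h2
    have : S ∈ F := by simp [hF, h1, h2]
    exact Finset.le_sup (f := id) this
  -- find j
  have hiU : i ∉ U := hPU.1
  have hsum : (0:ℝ) ≤ ∑ k ∈ Finset.univ \ U, (x k - y k) := by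
    have e1 : ∑ k ∈ Finset.univ \ U, x k = (∑ k, x k) - ∑ k ∈ U, x k :=
      (Finset.sum_sdiff_eq_sub (Finset.subset_univ U))
    have e2 : ∑ k ∈ Finset.univ \ U, y k = (∑ k, y k) - ∑ k ∈ U, y k :=
      (Finset.sum_sdiff_eq_sub (Finset.subset_univ U))
    have h3 := hy.2 U
    rw [Finset.sum_sub_distrib, e1, e2, hx.1, hy.1, hPU.2]
    linarith
  have hiU' : i ∈ Finset.univ \ U := by simp [hiU]
  have hj : ∃ j ∈ Finset.univ \ U, j ≠ i ∧ x j - y j > 0 := by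
    by_contra hcon
    push_neg at hcon
    have hrest : ∑ k ∈ (Finset.univ \ U).erase i, (x k - y k) ≤ 0 := by
      apply Finset.sum_nonpos
      intro k hk
      rcases Finset.mem_erase.mp hk with ⟨hki, hkU⟩
      exact hcon k hkU hki
    have h5 : x i - y i + ∑ k ∈ (Finset.univ \ U).erase i, (x k - y k)
        = ∑ k ∈ Finset.univ \ U, (x k - y k) :=
      Finset.add_sum_erase _ (fun k => x k - y k) hiU'
    rw [hxi, hyi] at h5
    linarith
  obtain ⟨j, hjU, hji, hjpos⟩ := hj
  have hjU' : j ∉ U := (Finset.mem_sdiff.mp hjU).2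
  have hxj : x j = 1 := by rcases hx01 j with h | h <;> rcases hy01 j with h' | h' <;>
    simp [h, h'] at hjpos ⊢ <;> linarith
  have hyj : y j = 0 := by
    rcases hy01 j with h' | h'
    · exact h'
    · rw [hxj, h'] at hjpos; linarith
  set x' : α → ℝ := fun k => if k = i then 1 else if k = j then 0 else x k with hx'
  have hx'sum : ∀ S : Finset α, ∑ k ∈ S, x' k =
      (∑ k ∈ S, x k) + (if i ∈ S then 1 else 0) - (if j ∈ S then 1 else 0) := by
    intro S
    have : ∀ k, x' k = x k + (if k = i then 1 else 0) - (if k = j then 1 else 0) := by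
      intro k
      by_cases h1 : k = i
      · subst h1; simp [hx', hxi, hji.symm]
      · by_cases h2 : k = j
        · subst h2; simp [hx', hxj, h1]
        · simp [hx', h1, h2]
    simp_rw [this, Finset.sum_sub_distrib, Finset.sum_add_distrib,
      Finset.sum_ite_eq' S i (fun _ => (1:ℝ)), Finset.sum_ite_eq' S j (fun _ => (1:ℝ))]
  refine ⟨j, hji, hxj, hyj, ?_, ?_⟩
  · -- efficiency
    rw [hx'sum Finset.univ]
    simp [hx.1]
  · intro S
    rw [hx'sum S]
    by_cases hjS : j ∈ S
    · by_cases hiS : i ∈ S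
      · simp only [hjS, hiS, if_pos]
        have := hx.2 S; linarith
      · -- j ∈ S, i ∉ S : S is not tight
        have hnt : (∑ k ∈ S, x k) ≠ v S := by
          intro heq
          exact hjU' (hsubU S hiS heq (hjS))
        -- integrality
        obtain ⟨zv, hzv⟩ := hint S
        have hzx : ∃ zx : ℤ, (∑ k ∈ S, x k) = (zx : ℝ) := by
          refine ⟨∑ k ∈ S, (if x k = 1 then (1:ℤ) else 0), ?_⟩
          push_cast
          apply Finset.sum_congr rfl
          intro k _
          rcases hx01 k with h | h <;> simp [h]
        obtain ⟨zx, hzxe⟩ := hzx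
        have hlt : v S < ∑ k ∈ S, x k := lt_of_le_of_ne (hx.2 S) (Ne.symm hnt)
        have : zv < zx := by
          rw [hzv, hzxe] at hlt; exact_mod_cast hlt
        have : (zv : ℝ) + 1 ≤ (zx : ℝ) := by exact_mod_cast this
        simp only [hjS, hiS, if_pos, if_neg]
        rw [hzv, hzxe]
        simp
        linarith
    · have := hx.2 S
      by_cases hiS : i ∈ S <;> simp [hjS, hiS] <;> linarith

theorem stmt5 {N : Type*} [Fintype N] [DecidableEq N] [Nonempty N]
    (v : Finset N → ℝ) (hv0 : v ∅ = 0)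
    (hconv : IsConvex v) (hint : IsIntegerGame v)
    (hSV : ∀ i : N, 0 ≤ SV v i ∧ SV v i < 1)
    (ord : N ≃ Fin (Fintype.card N))
    (hmono : ∀ i j : N, ord i ≤ ord j → SV v j ≤ SV v i)
    (xs : N → ℝ) (hxs01 : ∀ i, xs i = 0 ∨ xs i = 1) (hxscore : InCore v xs)
    (hlexmax : ¬ ∃ y : N → ℝ, (∀ i, y i = 0 ∨ y i = 1) ∧ InCore v y ∧
        ∃ i : N, (∀ j : N, ord j < ord i → xs j = y j) ∧ xs i = 0 ∧ y i = 1) :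
    ∀ p : ℝ, 1 ≤ p → ∀ y : N → ℝ, (∀ i, y i = 0 ∨ y i = 1) → InCore v y →
      (∑ i, |SV v i - xs i| ^ p) ^ (1 / p) ≤ (∑ i, |SV v i - y i| ^ p) ^ (1 / p) := by
  classical
  intro p hp
  have hp0 : (0:ℝ) ≤ p := by linarith
  -- main induction on the number of coordinates where y differs from xs
  have key : ∀ n : ℕ, ∀ y : N → ℝ, (∀ k, y k = 0 ∨ y k = 1) → InCore v y →
      (Finset.univ.filter (fun k => xs k ≠ y k)).card ≤ n →
      (∑ k, |SV v k - xs k| ^ p) ≤ (∑ k, |SV v k - y k| ^ p) := by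
    intro n
    induction n with
    | zero =>
        intro y hy01 hy hcard
        have hemp : Finset.univ.filter (fun k => xs k ≠ y k) = ∅ :=
          Finset.card_eq_zero.mp (Nat.le_zero.mp hcard)
        have heq : ∀ k, xs k = y k := by
          intro k
          by_contra hk
          have hmem : k ∈ Finset.univ.filter (fun k => xs k ≠ y k) := by
            simp [hk]
          rw [hemp] at hmem
          simp at hmem
        exact le_of_eq (Finset.sum_congr rfl (fun k _ => by rw [heq k]))
    | succ n ih =>
        intro y hy01 hy hcard
        by_cases hdiff : Finset.univ.filter (fun k => xs k ≠ y k) = ∅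
        · have heq : ∀ k, xs k = y k := by
            intro k
            by_contra hk
            have hmem : k ∈ Finset.univ.filter (fun k => xs k ≠ y k) := by simp [hk]
            rw [hdiff] at hmem
            simp at hmem
          exact le_of_eq (Finset.sum_congr rfl (fun k _ => by rw [heq k]))
        · -- pick the earliest difference
          obtain ⟨i, hiD, himin⟩ := Finset.exists_min_image
            (Finset.univ.filter (fun k => xs k ≠ y k)) (fun k => ord k)
            (Finset.nonempty_of_ne_empty hdiff)
          have hine : xs i ≠ y i := (Finset.mem_filter.mp hiD).2
          rcases hxs01 i with hxsi | hxsi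
          · -- xs i = 0, so y i = 1: contradict lex-maximality
            have hyi : y i = 1 := by
              rcases hy01 i with h | h
              · exact absurd (hxsi.trans h.symm) hine
              · exact h
            obtain ⟨j, hji, hxsj, hyj, hzcore⟩ :=
              coexchange v hv0 hconv hint xs y hxs01 hy01 hxscore hy i hxsi hyi
            exfalso
            apply hlexmax
            refine ⟨fun k => if k = i then 1 else if k = j then 0 else xs k, ?_, hzcore, i, ?_, hxsi, by simp⟩
            · intro k
              by_cases h1 : k = i
              · simp [h1]
              · by_cases h2 : k = j
                · subst h2; simp [hji]
                · simp only [if_neg h1, if_neg h2]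
                  exact hxs01 k
            · intro k hk
              have hki : k ≠ i := fun h => by subst h; exact lt_irrefl _ hk
              have hkj : k ≠ j := by
                intro h
                subst h
                have : xs k ≠ y k := by rw [hxsj, hyj]; norm_num
                have hmem : k ∈ Finset.univ.filter (fun k' => xs k' ≠ y k') := by simp [this]
                exact absurd hk (not_lt.mpr (himin k hmem))
              simp [hki, hkj]
          · -- xs i = 1, y i = 0: improve y by co-exchange
            have hyi : y i = 0 := by
              rcases hy01 i with h | h
              · exact h
              · exact absurd (hxsi.trans h.symm) hine
            obtain ⟨j, hji, hyj, hxsj, hy'core⟩ :=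
              coexchange v hv0 hconv hint y xs hy01 hxs01 hy hxscore i hyi hxsi
            set y' : N → ℝ := fun k => if k = i then 1 else if k = j then 0 else y k with hy'
            have hy'01 : ∀ k, y' k = 0 ∨ y' k = 1 := by
              intro k
              by_cases h1 : k = i
              · right; simp [hy', h1]
              · by_cases h2 : k = j
                · subst h2; left; simp [hy', hji]
                · have e : y' k = y k := by simp [hy', h1, h2]
                  rw [e]; exact hy01 k
            -- j is also a difference point, so ord i < ord j
            have hjD : j ∈ Finset.univ.filter (fun k => xs k ≠ y k) := by
              simp only [Finset.mem_filter, Finset.mem_univ, true_and]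
              rw [hxsj, hyj]; norm_num
            have hordij : ord i < ord j := by
              rcases lt_or_eq_of_le (himin j hjD) with h | h
              · exact h
              · exact absurd (ord.injective h).symm hji
            have hSVji : SV v j ≤ SV v i := hmono i j (le_of_lt hordij)
            -- fewer differences for y'
            have hsub : Finset.univ.filter (fun k => xs k ≠ y' k) ⊆
                (Finset.univ.filter (fun k => xs k ≠ y k)).erase i := by
              intro k hk
              simp only [Finset.mem_filter, Finset.mem_univ, true_and] at hk
              by_cases h1 : k = i
              · subst h1; simp [hy', hxsi] at hk
              · by_cases h2 : k = j
                · subst h2; simp [hy', h1, hxsj] at hk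
                · have e : y' k = y k := by simp [hy', h1, h2]
                  rw [e] at hk
                  exact Finset.mem_erase.mpr ⟨h1, by simp [hk]⟩
            have hcard' : (Finset.univ.filter (fun k => xs k ≠ y' k)).card ≤ n := by
              have h1 : ((Finset.univ.filter (fun k => xs k ≠ y k)).erase i).card
                  = (Finset.univ.filter (fun k => xs k ≠ y k)).card - 1 :=
                Finset.card_erase_of_mem hiD
              have h2 := Finset.card_le_card hsub
              have h3 : 1 ≤ (Finset.univ.filter (fun k => xs k ≠ y k)).card :=
                Finset.card_pos.mpr ⟨i, hiD⟩
              omega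
            have hstep := ih y' hy'01 hy'core hcard'
            refine le_trans hstep ?_
            -- compare sums of y' and y : they differ only at i and j
            have hsplit : ∀ z : N → ℝ,
                (∑ k, |SV v k - z k| ^ p) = |SV v i - z i| ^ p + |SV v j - z j| ^ p +
                  ∑ k ∈ (Finset.univ.erase i).erase j, |SV v k - z k| ^ p := by
              intro z
              have e1 : |SV v i - z i| ^ p + ∑ k ∈ Finset.univ.erase i, |SV v k - z k| ^ p
                  = ∑ k, |SV v k - z k| ^ p :=
                Finset.add_sum_erase Finset.univ (fun k => |SV v k - z k| ^ p) (Finset.mem_univ i)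
              have hjmem : j ∈ Finset.univ.erase i := Finset.mem_erase.mpr ⟨hji, Finset.mem_univ j⟩
              have e2 : |SV v j - z j| ^ p + ∑ k ∈ (Finset.univ.erase i).erase j, |SV v k - z k| ^ p
                  = ∑ k ∈ Finset.univ.erase i, |SV v k - z k| ^ p :=
                Finset.add_sum_erase (Finset.univ.erase i) (fun k => |SV v k - z k| ^ p) hjmem
              rw [← e1, ← e2]; ring
            rw [hsplit y', hsplit y]
            have erest : ∑ k ∈ (Finset.univ.erase i).erase j, |SV v k - y' k| ^ p
                = ∑ k ∈ (Finset.univ.erase i).erase j, |SV v k - y k| ^ p := by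
              apply Finset.sum_congr rfl
              intro k hk
              rcases Finset.mem_erase.mp hk with ⟨hkj, hk'⟩
              rcases Finset.mem_erase.mp hk' with ⟨hki, _⟩
              simp [hy', hki, hkj]
            rw [erest]
            have hyi' : y' i = 1 := by simp [hy']
            have hyj' : y' j = 0 := by simp [hy', hji]
            rw [hyi', hyj', hyi, hyj]
            -- two-point inequality
            have h1 := (hSV i).1
            have h2 := (hSV i).2
            have h3 := (hSV j).1
            have h4 := (hSV j).2
            have ha : |SV v i - 1| = 1 - SV v i := by rw [abs_of_nonpos (by linarith)]; ring
            have hb : |SV v j - 0| = SV v j := by rw [sub_zero, abs_of_nonneg h3]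
            have hc : |SV v i - 0| = SV v i := by rw [sub_zero, abs_of_nonneg h1]
            have hd : |SV v j - 1| = 1 - SV v j := by rw [abs_of_nonpos (by linarith)]; ring
            rw [ha, hb, hc, hd]
            have k1 : (1 - SV v i) ^ p ≤ (1 - SV v j) ^ p :=
              Real.rpow_le_rpow (by linarith) (by linarith) hp0
            have k2 : SV v j ^ p ≤ SV v i ^ p :=
              Real.rpow_le_rpow h3 hSVji hp0
            linarith
  intro y hy01 hy
  have hsums := key _ y hy01 hy le_rfl
  have hnn : (0:ℝ) ≤ ∑ k, |SV v k - xs k| ^ p :=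
    Finset.sum_nonneg (fun k _ => Real.rpow_nonneg (abs_nonneg _) p)
  exact Real.rpow_le_rpow hnn hsums (by positivity)
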